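/- arXiv:1505.04545 — 3 statements merged into one kernel-verified Lean document; each statement's English description precedes it below -/
import Mathlib

section
/- Suppose (Δ, ε) is a Frobenius structure on R. Then there exists a unique unit ω of R such that Δ(u) = u ⊗ (ω·α) - (u·σ(α)) ⊗ ω for all u ∈ R, ε(ω) = 0, and ε(ω·α) = 1. -/
open Polynomial TensorProduct

noncomputable section

variable {K : Type*} [CommRing K]

/-- The quadratic `K`-algebra `K[X]/(X² - s·X + p)`. -/
abbrev Quad (s p : K) : Type _ := AdjoinRoot (X ^ 2 - C s * X + C p)

/-- The image of `X`, i.e. the generator `α`. -/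
def qα (s p : K) : Quad s p := AdjoinRoot.root _

lemma quad_aeval_root (s p : K) :
    (aeval (qα s p)) (X ^ 2 - C s * X + C p) = 0 := by
  simp [qα, AdjoinRoot.aeval_eq, AdjoinRoot.mk_self]

/-- The involution `σ` of the quadratic algebra, with `σ α = s - α`. -/
def qσ (s p : K) : Quad s p →ₐ[K] Quad s p :=
  AdjoinRoot.liftAlgHom _ (Algebra.ofId K (Quad s p)) (algebraMap K (Quad s p) s - qα s p) (by
    show aeval (algebraMap K (Quad s p) s - qα s p) (X ^ 2 - C s * X + C p) = 0
    have h := quad_aeval_root s p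
    simp only [map_add, map_sub, map_mul, map_pow, aeval_X, aeval_C] at h ⊢
    linear_combination h)

section Aux
variable (s p : K)

lemma monic_quad : (X ^ 2 - C s * X + C p).Monic := by
  monicity!

lemma α_sq : qα s p ^ 2 = s • qα s p + (-p) • (1 : Quad s p) := by
  have h := quad_aeval_root s p
  simp only [map_add, map_sub, map_mul, map_pow, aeval_X, aeval_C] at h
  rw [Algebra.smul_def, Algebra.smul_def, map_neg, mul_one]
  linear_combination h

lemma qσ_α : qσ s p (qα s p) = s • (1 : Quad s p) - qα s p := by
  rw [Algebra.smul_def, mul_one]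
  simp [qσ, qα, AdjoinRoot.liftAlgHom_root]

def eT (ε : Quad s p →ₗ[K] K) : Quad s p ⊗[K] Quad s p →ₗ[K] Quad s p :=
  (TensorProduct.lid K (Quad s p)).toLinearMap ∘ₗ (LinearMap.rTensor (Quad s p) ε)

def fTR (ε : Quad s p →ₗ[K] K) : Quad s p ⊗[K] Quad s p →ₗ[K] Quad s p :=
  (TensorProduct.rid K (Quad s p)).toLinearMap ∘ₗ (LinearMap.lTensor (Quad s p) ε)

variable (ε : Quad s p →ₗ[K] K)

lemma eT_tmul (x y : Quad s p) : eT s p ε (x ⊗ₜ[K] y) = ε x • y := by simp [eT]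

lemma fTR_tmul (x y : Quad s p) : fTR s p ε (x ⊗ₜ[K] y) = ε y • x := by simp [fTR]

lemma fTR_mul_left (u : Quad s p) (t : Quad s p ⊗[K] Quad s p) :
    fTR s p ε ((u ⊗ₜ[K] (1 : Quad s p)) * t) = u * fTR s p ε t := by
  induction t using TensorProduct.induction_on with
  | zero => simp
  | tmul x y => simp [Algebra.TensorProduct.tmul_mul_tmul, fTR_tmul, mul_smul_comm]
  | add a b ha hb => simp only [mul_add, map_add, ha, hb]

lemma eT_mul_right (t : Quad s p ⊗[K] Quad s p) (u : Quad s p) :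
    eT s p ε (t * ((1 : Quad s p) ⊗ₜ[K] u)) = eT s p ε t * u := by
  induction t using TensorProduct.induction_on with
  | zero => simp
  | tmul x y => simp [Algebra.TensorProduct.tmul_mul_tmul, eT_tmul, smul_mul_assoc]
  | add a b ha hb => simp only [add_mul, map_add, ha, hb]

variable [Nontrivial K]

lemma natDegree_quad : (X ^ 2 - C s * X + C p).natDegree = 2 := by
  compute_degree!

def qB : Module.Basis (Fin 2) K (Quad s p) :=
  ((AdjoinRoot.powerBasis' (monic_quad s p)).basis).reindex (finCongr (natDegree_quad s p))

lemma qB_apply (i : Fin 2) : qB s p i = qα s p ^ (i : ℕ) := by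
  simp only [qB, Module.Basis.reindex_apply, PowerBasis.basis_eq_pow, AdjoinRoot.powerBasis'_gen,
    finCongr_symm, finCongr_apply, Fin.coe_cast, qα]
  rfl

lemma qB_zero : qB s p 0 = 1 := by rw [qB_apply]; norm_num
lemma qB_one : qB s p 1 = qα s p := by rw [qB_apply]; norm_num

/-- coordinate functionals -/
def qφ (i : Fin 2) : Quad s p →ₗ[K] K := (qB s p).coord i

lemma qφ_one (i : Fin 2) : qφ s p i 1 = if i = 0 then 1 else 0 := by
  rw [← qB_zero s p]
  simp [qφ, Module.Basis.coord_apply, Module.Basis.repr_self, Finsupp.single_apply, eq_comm]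

lemma qφ_α (i : Fin 2) : qφ s p i (qα s p) = if i = 1 then 1 else 0 := by
  rw [← qB_one s p]
  simp [qφ, Module.Basis.coord_apply, Module.Basis.repr_self, Finsupp.single_apply, eq_comm]

lemma repr_eq (u : Quad s p) :
    u = qφ s p 0 u • (1 : Quad s p) + qφ s p 1 u • qα s p := by
  have h := (qB s p).sum_repr u
  rw [Fin.sum_univ_two, qB_zero, qB_one] at h
  exact h.symm

lemma indep2 {a b c d : K}
    (h : a • (1 : Quad s p) + b • qα s p = c • (1 : Quad s p) + d • qα s p) :
    a = c ∧ b = d := by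
  have h0 := congrArg (qφ s p 0) h
  have h1 := congrArg (qφ s p 1) h
  simp only [map_add, map_smul, qφ_one, qφ_α] at h0 h1
  norm_num at h0 h1
  exact ⟨h0, h1⟩

lemma qφ_mul_α (u : Quad s p) :
    qφ s p 1 (qα s p * u) = qφ s p 0 u + s * qφ s p 1 u := by
  conv_lhs => rw [repr_eq s p u]
  have hsq : qα s p * qα s p = s • qα s p + (-p) • (1 : Quad s p) := by
    rw [← pow_two]; exact α_sq s p
  rw [mul_add, mul_smul_comm, mul_smul_comm, mul_one, hsq]
  simp only [map_add, map_smul, qφ_one, qφ_α, smul_eq_mul]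
  norm_num
  ring

def fT (i : Fin 2) : Quad s p ⊗[K] Quad s p →ₗ[K] Quad s p :=
  (TensorProduct.lid K (Quad s p)).toLinearMap ∘ₗ (LinearMap.rTensor (Quad s p) (qφ s p i))

lemma fT_tmul (i : Fin 2) (u v : Quad s p) : fT s p i (u ⊗ₜ[K] v) = qφ s p i u • v := by
  simp [fT]

lemma tensor_eq (t : Quad s p ⊗[K] Quad s p) :
    t = (1 : Quad s p) ⊗ₜ[K] (fT s p 0 t) + qα s p ⊗ₜ[K] (fT s p 1 t) := by
  suffices h : (LinearMap.id : Quad s p ⊗[K] Quad s p →ₗ[K] Quad s p ⊗[K] Quad s p) =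
      (TensorProduct.mk K (Quad s p) (Quad s p) 1) ∘ₗ fT s p 0 +
      (TensorProduct.mk K (Quad s p) (Quad s p) (qα s p)) ∘ₗ fT s p 1 by
    have := LinearMap.congr_fun h t
    simpa using this
  apply TensorProduct.ext'
  intro u v
  simp only [LinearMap.id_coe, id_eq, LinearMap.add_apply, LinearMap.coe_comp,
    Function.comp_apply, mk_apply, fT_tmul]
  rw [← smul_tmul, ← smul_tmul, ← add_tmul, ← repr_eq]

lemma fT_mul_right (i : Fin 2) (t : Quad s p ⊗[K] Quad s p) (v : Quad s p) :
    fT s p i (t * ((1 : Quad s p) ⊗ₜ[K] v)) = fT s p i t * v := by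
  induction t using TensorProduct.induction_on with
  | zero => simp
  | tmul x y => simp [Algebra.TensorProduct.tmul_mul_tmul, fT_tmul, smul_mul_assoc]
  | add a b ha hb => simp only [add_mul, map_add, ha, hb]

lemma fT_α_mul (t : Quad s p ⊗[K] Quad s p) :
    fT s p 1 ((qα s p ⊗ₜ[K] (1 : Quad s p)) * t) = fT s p 0 t + s • fT s p 1 t := by
  induction t using TensorProduct.induction_on with
  | zero => simp
  | tmul x y =>
      rw [Algebra.TensorProduct.tmul_mul_tmul, one_mul, fT_tmul, fT_tmul, fT_tmul, qφ_mul_α,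
        add_smul, mul_smul]
  | add a b ha hb => simp only [mul_add, map_add, ha, hb]; module

end Aux

/-- If `(Δ, ε)` is a Frobenius structure on `R = K[X]/(X² - s·X + p)`, then there is a
unique unit `ω` of `R` such that `Δ u = u ⊗ (ω·α) - (u·σ(α)) ⊗ ω` for all `u`,
`ε ω = 0` and `ε (ω·α) = 1`. -/
theorem stmt1 (s p : K)
    (Δ : Quad s p →ₗ[K] Quad s p ⊗[K] Quad s p) (ε : Quad s p →ₗ[K] K)
    (hΔ₁ : ∀ u v : Quad s p, Δ (u * v) = (u ⊗ₜ[K] (1 : Quad s p)) * Δ v)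
    (hΔ₂ : ∀ u v : Quad s p, Δ (u * v) = Δ u * ((1 : Quad s p) ⊗ₜ[K] v))
    (hε : ∀ u : Quad s p,
      (TensorProduct.rid K (Quad s p)) ((LinearMap.lTensor (Quad s p) ε) (Δ u)) = u) :
    ∃! ω : (Quad s p)ˣ,
      (∀ u : Quad s p,
        Δ u = u ⊗ₜ[K] ((ω : Quad s p) * qα s p)
            - (u * qσ s p (qα s p)) ⊗ₜ[K] (ω : Quad s p)) ∧
      ε (ω : Quad s p) = 0 ∧ ε ((ω : Quad s p) * qα s p) = 1 := by
  rcases subsingleton_or_nontrivial K with hK | hK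
  · haveI : Subsingleton (Quad s p) := Module.subsingleton K _
    haveI : Subsingleton (Quad s p ⊗[K] Quad s p) := Module.subsingleton K _
    refine ⟨1, ⟨fun u => Subsingleton.elim _ _, Subsingleton.elim _ _, Subsingleton.elim _ _⟩,
      fun ω' _ => Units.ext (Subsingleton.elim _ _)⟩
  · -- main case
    have hΔu : ∀ u, Δ u = (u ⊗ₜ[K] (1 : Quad s p)) * Δ 1 := fun u => by
      have h := hΔ₁ u 1; rwa [mul_one] at h
    have hcas : ∀ u : Quad s p,
        (u ⊗ₜ[K] (1 : Quad s p)) * Δ 1 = Δ 1 * ((1 : Quad s p) ⊗ₜ[K] u) := by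
      intro u
      rw [← hΔu u]
      have h := hΔ₂ 1 u; rwa [one_mul] at h
    set r0 := fT s p 0 (Δ 1) with hr0
    set r1 := fT s p 1 (Δ 1) with hr1
    have he_eq : Δ 1 = (1 : Quad s p) ⊗ₜ[K] r0 + qα s p ⊗ₜ[K] r1 := tensor_eq s p (Δ 1)
    have hrel : r0 + s • r1 = r1 * qα s p := by
      have h := congrArg (fT s p 1) (hcas (qα s p))
      rwa [fT_α_mul, fT_mul_right] at h
    have hel : ∀ u : Quad s p, (u ⊗ₜ[K] (1 : Quad s p)) * Δ 1
        = u ⊗ₜ[K] r0 + (u * qα s p) ⊗ₜ[K] r1 := by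
      intro u
      rw [he_eq, mul_add, Algebra.TensorProduct.tmul_mul_tmul,
        Algebra.TensorProduct.tmul_mul_tmul, mul_one, one_mul, one_mul]
    have her : ∀ u : Quad s p, Δ 1 * ((1 : Quad s p) ⊗ₜ[K] u)
        = (1 : Quad s p) ⊗ₜ[K] (r0 * u) + qα s p ⊗ₜ[K] (r1 * u) := by
      intro u
      rw [he_eq, add_mul, Algebra.TensorProduct.tmul_mul_tmul,
        Algebra.TensorProduct.tmul_mul_tmul, mul_one, mul_one]
    have hFe : fTR s p ε (Δ 1) = 1 := by simpa [fTR] using hε 1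
    have hI : ∀ u : Quad s p, u = ε (r0 * u) • (1 : Quad s p) + ε (r1 * u) • qα s p := by
      intro u
      have h := congrArg (fTR s p ε) (hcas u)
      rwa [fTR_mul_left, hFe, mul_one, her, map_add, fTR_tmul, fTR_tmul] at h
    have h1 := hI 1
    rw [mul_one, mul_one] at h1
    have hα1 := hI (qα s p)
    have e1 : (1 : Quad s p) = (1 : K) • (1 : Quad s p) + (0 : K) • qα s p := by module
    have eα : qα s p = (0 : K) • (1 : Quad s p) + (1 : K) • qα s p := by module
    obtain ⟨h_r0, h_r1⟩ := indep2 s p (e1.symm.trans h1)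
    obtain ⟨h_r0α, h_r1α⟩ := indep2 s p (eα.symm.trans hα1)
    -- h_r0 : 1 = ε r0, h_r1 : 0 = ε r1, h_r0α : 0 = ε (r0 * α), h_r1α : 1 = ε (r1 * α)
    have hII : ∀ u : Quad s p,
        ε u • r0 + ε (u * qα s p) • r1 = eT s p ε (Δ 1) * u := by
      intro u
      have h := congrArg (eT s p ε) (hcas u)
      rwa [eT_mul_right, hel, map_add, eT_tmul, eT_tmul] at h
    have hEr0 : eT s p ε (Δ 1) * r0 = r0 := by
      have h := hII r0
      rw [← h_r0, ← h_r0α] at h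
      simpa using h.symm
    have hEr1 : eT s p ε (Δ 1) * r1 = r1 := by
      have h := hII r1
      rw [← h_r1, ← h_r1α] at h
      simpa using h.symm
    have hEe : eT s p ε (Δ 1) = 1 := by
      have h := hI (eT s p ε (Δ 1))
      rw [mul_comm r0, mul_comm r1, hEr0, hEr1, ← h_r0, ← h_r1] at h
      simpa using h
    have hinv : ε (1 : Quad s p) • r0 + ε (qα s p) • r1 = 1 := by
      have h := hII 1
      rwa [one_mul, mul_one, hEe] at h
    -- the inverse of r1
    have hmul : r1 * (algebraMap K (Quad s p) (ε (qα s p) - s * ε 1)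
        + algebraMap K (Quad s p) (ε 1) * qα s p) = 1 := by
      have h1' := hinv
      simp only [Algebra.smul_def] at h1' hrel
      simp only [map_sub, map_mul]
      linear_combination h1' - algebraMap K (Quad s p) (ε 1) * hrel
    have hform : ∀ u : Quad s p,
        Δ u = u ⊗ₜ[K] (r1 * qα s p) - (u * qσ s p (qα s p)) ⊗ₜ[K] r1 := by
      intro u
      rw [hΔu u, hel, qσ_α, ← hrel]
      rw [mul_sub, mul_smul_comm, mul_one, tmul_add, sub_tmul, tmul_smul, ← smul_tmul']
      abel
    refine ⟨⟨r1, _, hmul, by rw [mul_comm]; exact hmul⟩,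
      ⟨hform, h_r1.symm, h_r1α.symm⟩, ?_⟩
    rintro ω' ⟨hf, -, -⟩
    apply Units.ext
    have h := congrArg (fT s p 1) ((hf 1).symm.trans (hΔu 1))
    rw [hel, one_mul, one_mul, map_add, map_sub, fT_tmul, fT_tmul, fT_tmul, fT_tmul, qσ_α] at h
    have hv : qφ s p 1 (s • (1 : Quad s p) - qα s p) = -1 := by
      simp [map_sub, map_smul, qφ_one, qφ_α]
    rw [hv, qφ_one, qφ_α] at h
    norm_num at h
    exact h


end
end

section
/- The element 1 - t·δ equals ω·ω̄⁻¹ and is a unit of R₀, and the subring of R₀ generated by the elements α, t, δ, ω, ω⁻¹, and (1 - t·δ)⁻¹ is all of R₀. -/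
open MvPolynomial

noncomputable section

/-- The polynomial ring `ℤ[α, ᾱ, a, b]`: variables `0,1,2,3` are `α, ᾱ, a, b`. -/
abbrev P : Type _ := MvPolynomial (Fin 4) ℤ

/-- The element `(a + b·α)·(a + b·ᾱ)`. -/
def dElt : P := (X 2 + X 3 * X 0) * (X 2 + X 3 * X 1)

/-- The universal ring `R₀`, the localization of `P` away from `(a + b·α)(a + b·ᾱ)`. -/
abbrev R0 : Type _ := Localization.Away dElt

/-- `α` in `R₀`. -/
def αR : R0 := algebraMap P R0 (X 0)
/-- `ᾱ` in `R₀`. -/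
def ᾱR : R0 := algebraMap P R0 (X 1)
/-- `a` in `R₀`. -/
def aR : R0 := algebraMap P R0 (X 2)
/-- `b` in `R₀`. -/
def bR : R0 := algebraMap P R0 (X 3)
/-- `ω = a + b·α`. -/
def ωR : R0 := aR + bR * αR
/-- `ω̄ = a + b·ᾱ`. -/
def ωbarR : R0 := aR + bR * ᾱR
/-- `t = -b·(ω·ω̄)⁻¹`. -/
def tR : R0 := -bR * Ring.inverse (ωR * ωbarR)
/-- `δ = ω·(α - ᾱ)`. -/
def δR : R0 := ωR * (αR - ᾱR)

lemma ringInv_eq {y x : R0} (h : IsUnit y) (hx : x * y = 1) : Ring.inverse y = x := by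
  have := Ring.mul_inverse_cancel y h
  calc Ring.inverse y = x * y * Ring.inverse y := by rw [hx, one_mul]
    _ = x * (y * Ring.inverse y) := by ring
    _ = x := by rw [this, mul_one]

lemma dElt_map : algebraMap P R0 dElt = ωR * ωbarR := by
  simp [dElt, ωR, ωbarR, aR, bR, αR, ᾱR, map_mul, map_add]

lemma dElt_isUnit : IsUnit (ωR * ωbarR) := by
  rw [← dElt_map]
  exact IsLocalization.Away.algebraMap_isUnit dElt

lemma ω_isUnit : IsUnit ωR := isUnit_of_mul_isUnit_left dElt_isUnit

lemma ωbar_isUnit : IsUnit ωbarR := isUnit_of_mul_isUnit_right dElt_isUnit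

lemma key : (1 - tR * δR) * ωbarR = ωR := by
  have hinv : (ωR * ωbarR) * Ring.inverse (ωR * ωbarR) = 1 :=
    Ring.mul_inverse_cancel _ dElt_isUnit
  have h : (1 - tR * δR) * ωbarR - ωR
      = bR * (αR - ᾱR) * ((ωR * ωbarR) * Ring.inverse (ωR * ωbarR) - 1) := by
    simp only [tR, δR, ωR, ωbarR]
    ring
  have h2 : (1 - tR * δR) * ωbarR - ωR = 0 := by rw [h, hinv]; ring
  exact sub_eq_zero.mp h2

lemma part1 : 1 - tR * δR = ωR * Ring.inverse ωbarR := by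
  conv_rhs => rw [← key]
  exact (Ring.mul_inverse_cancel_right ωbarR (1 - tR * δR) ωbar_isUnit).symm

lemma unit1 : IsUnit (1 - tR * δR) := by
  rw [part1]; exact ω_isUnit.mul ωbar_isUnit.ringInverse

/-- `1 - t·δ = ω·ω̄⁻¹` is a unit of `R₀`, and `R₀` is generated as a ring by
`α`, `t`, `δ`, `ω`, `ω⁻¹` and `(1 - t·δ)⁻¹`. -/
theorem stmt11 :
    1 - tR * δR = ωR * Ring.inverse ωbarR ∧
    IsUnit (1 - tR * δR) ∧
    Subring.closure {αR, tR, δR, ωR, Ring.inverse ωR, Ring.inverse (1 - tR * δR)}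
      = (⊤ : Subring R0) := by
  refine ⟨part1, unit1, ?_⟩
  set S : Subring R0 :=
    Subring.closure {αR, tR, δR, ωR, Ring.inverse ωR, Ring.inverse (1 - tR * δR)} with hS
  have hα : αR ∈ S := Subring.subset_closure (by simp)
  have ht : tR ∈ S := Subring.subset_closure (by simp)
  have hδ : δR ∈ S := Subring.subset_closure (by simp)
  have hω : ωR ∈ S := Subring.subset_closure (by simp)
  have hinvω : Ring.inverse ωR ∈ S := Subring.subset_closure (by simp)
  have hinv1 : Ring.inverse (1 - tR * δR) ∈ S := Subring.subset_closure (by simp)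
  have hωbar : ωbarR ∈ S := by
    have e : Ring.inverse (1 - tR * δR) * ωR = ωbarR := by
      rw [← key, Ring.inverse_mul_cancel_left _ _ unit1]
    rw [← e]; exact S.mul_mem hinv1 hω
  have hinvωbar : Ring.inverse ωbarR ∈ S := by
    have e : Ring.inverse ωbarR = Ring.inverse ωR * (1 - tR * δR) := by
      apply ringInv_eq ωbar_isUnit
      rw [mul_assoc, key, Ring.inverse_mul_cancel _ ω_isUnit]
    rw [e]
    exact S.mul_mem hinvω (S.sub_mem S.one_mem (S.mul_mem ht hδ))
  have hb : bR ∈ S := by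
    have e : bR = -(tR * (ωR * ωbarR)) := by
      rw [tR, Ring.inverse_mul_cancel_right _ _ dElt_isUnit, neg_neg]
    rw [e]; exact S.neg_mem (S.mul_mem ht (S.mul_mem hω hωbar))
  have ha : aR ∈ S := by
    have e : aR = ωR - bR * αR := by rw [ωR]; ring
    rw [e]; exact S.sub_mem hω (S.mul_mem hb hα)
  have hᾱ : ᾱR ∈ S := by
    have e : ᾱR = αR - Ring.inverse ωR * δR := by
      rw [δR, Ring.inverse_mul_cancel_left _ _ ω_isUnit]; ring
    rw [e]; exact S.sub_mem hα (S.mul_mem hinvω hδ)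
  have hinvd : Ring.inverse (ωR * ωbarR) ∈ S := by
    have e : Ring.inverse (ωR * ωbarR) = Ring.inverse ωR * Ring.inverse ωbarR := by
      apply ringInv_eq dElt_isUnit
      rw [mul_mul_mul_comm, Ring.inverse_mul_cancel _ ω_isUnit,
        Ring.inverse_mul_cancel _ ωbar_isUnit, one_mul]
    rw [e]; exact S.mul_mem hinvω hinvωbar
  have hrange : ∀ p : P, algebraMap P R0 p ∈ S := by
    intro p
    induction p using MvPolynomial.induction_on with
    | C i =>
      have : algebraMap P R0 (C i) = ((i : ℤ) : R0) := by
        rw [show (C i : P) = ((i : ℤ) : P) by simp, map_intCast]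
      rw [this]; exact intCast_mem S i
    | add p q hp hq => rw [map_add]; exact S.add_mem hp hq
    | mul_X p i hp =>
      rw [map_mul]
      refine S.mul_mem hp ?_
      fin_cases i
      · exact hα
      · exact hᾱ
      · exact ha
      · exact hb
  rw [eq_top_iff]
  rintro x -
  obtain ⟨⟨p, s⟩, hx⟩ := IsLocalization.surj (Submonoid.powers dElt) x
  obtain ⟨n, hn⟩ := s.2
  have hs : IsUnit (algebraMap P R0 s.1) := by
    rw [← hn, map_pow, dElt_map]; exact dElt_isUnit.pow n
  have hxeq : x = algebraMap P R0 p * Ring.inverse (algebraMap P R0 s.1) :=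
    (Ring.eq_mul_inverse_iff_mul_eq _ _ _ hs).mpr hx
  rw [hxeq]
  refine S.mul_mem (hrange p) ?_
  rw [← hn, map_pow, dElt_map, ← Ring.inverse_pow]
  exact S.pow_mem hinvd n

end
end

section
/- Set s := -δ²·(1 - t·δ)⁻¹ ∈ A. Then the unique ring homomorphism from ℤ[S, T][X]/(X² - T·S·X + S) to A sending S to s, T to t, and X to δ is bijective; in other words, A is a free module of rank 2 over its subring generated by s and t, with basis (1, δ), and δ satisfies δ² - t·s·δ + s = 0. -/
noncomputable section

/-- The polynomial ring `ℤ[t, δ]`: variable `0` is `t`, variable `1` is `δ`. -/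
abbrev Ztδ : Type _ := MvPolynomial (Fin 2) ℤ

/-- The ring `A`, the localization of `ℤ[t, δ]` away from `1 - t·δ`. -/
abbrev ARing : Type _ :=
  Localization.Away ((1 : Ztδ) - MvPolynomial.X 0 * MvPolynomial.X 1)

/-- `t` in `A`. -/
def tA : ARing := algebraMap Ztδ ARing (MvPolynomial.X 0)
/-- `δ` in `A`. -/
def δA : ARing := algebraMap Ztδ ARing (MvPolynomial.X 1)
/-- `s = -δ²·(1 - t·δ)⁻¹` in `A`. -/
def sA : ARing := -δA ^ 2 * Ring.inverse (1 - tA * δA)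

/-- The polynomial ring `ℤ[S, T]`: variable `0` is `S`, variable `1` is `T`. -/
abbrev ZST : Type _ := MvPolynomial (Fin 2) ℤ

/-- The quotient `ℤ[S, T][X]/(X² - T·S·X + S)`. -/
abbrev QST : Type _ :=
  AdjoinRoot ((Polynomial.X ^ 2
    - Polynomial.C (MvPolynomial.X 1 * MvPolynomial.X 0) * Polynomial.X
    + Polynomial.C (MvPolynomial.X 0) : Polynomial ZST))

namespace Stmt13Aux

open MvPolynomial Polynomial

abbrev pQ : Polynomial ZST :=
  Polynomial.X ^ 2
    - Polynomial.C (MvPolynomial.X 1 * MvPolynomial.X 0) * Polynomial.X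
    + Polynomial.C (MvPolynomial.X 0)

def xQ : QST := AdjoinRoot.root pQ
def SQ : QST := algebraMap ZST QST (MvPolynomial.X 0)
def TQ : QST := algebraMap ZST QST (MvPolynomial.X 1)

lemma hrel : xQ ^ 2 - TQ * SQ * xQ + SQ = 0 := by
  have h := AdjoinRoot.mk_self (f := pQ)
  simpa [pQ, xQ, SQ, TQ, AdjoinRoot.algebraMap_eq, map_add, map_sub, map_mul, map_pow,
    AdjoinRoot.mk_X, AdjoinRoot.mk_C] using h

lemma hQunit : (1 - TQ * xQ) * (1 - TQ ^ 2 * SQ + TQ * xQ) = 1 := by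
  linear_combination (-TQ ^ 2) * hrel

lemma huA : IsUnit ((1 : ARing) - tA * δA) := by
  have : (1 : ARing) - tA * δA
      = algebraMap Ztδ ARing ((1 : Ztδ) - MvPolynomial.X 0 * MvPolynomial.X 1) := by
    simp [tA, δA, map_sub, map_one, map_mul]
  rw [this]
  exact IsLocalization.Away.algebraMap_isUnit _

lemma hsA : sA * (1 - tA * δA) = -δA ^ 2 := by
  rw [sA, mul_assoc, Ring.inverse_mul_cancel _ huA, mul_one]

lemma hkey : δA ^ 2 - tA * sA * δA + sA = 0 := by
  linear_combination hsA

def φ : ZST →+* ARing := MvPolynomial.eval₂Hom (Int.castRingHom ARing) ![sA, tA]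

lemma hφ0 : φ (MvPolynomial.X 0) = sA := by simp [φ]
lemma hφ1 : φ (MvPolynomial.X 1) = tA := by simp [φ]

lemma h0 : pQ.eval₂ φ δA = 0 := by
  simp only [pQ, Polynomial.eval₂_add, Polynomial.eval₂_sub, Polynomial.eval₂_mul,
    Polynomial.eval₂_pow, Polynomial.eval₂_C, Polynomial.eval₂_X, map_mul, hφ0, hφ1]
  linear_combination hkey

def fQ : QST →+* ARing := AdjoinRoot.lift φ δA h0

lemma fQ_S : fQ SQ = sA := by
  rw [SQ, AdjoinRoot.algebraMap_eq, fQ, AdjoinRoot.lift_of, hφ0]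
lemma fQ_T : fQ TQ = tA := by
  rw [TQ, AdjoinRoot.algebraMap_eq, fQ, AdjoinRoot.lift_of, hφ1]
lemma fQ_x : fQ xQ = δA := AdjoinRoot.lift_root h0

def ψ : Ztδ →+* QST := MvPolynomial.eval₂Hom (Int.castRingHom QST) ![TQ, xQ]

lemma hψu : IsUnit (ψ ((1 : Ztδ) - MvPolynomial.X 0 * MvPolynomial.X 1)) := by
  have : ψ ((1 : Ztδ) - MvPolynomial.X 0 * MvPolynomial.X 1) = 1 - TQ * xQ := by
    simp [ψ]
  rw [this]
  exact IsUnit.of_mul_eq_one _ hQunit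

def gQ : ARing →+* QST :=
  IsLocalization.Away.lift ((1 : Ztδ) - MvPolynomial.X 0 * MvPolynomial.X 1) hψu

lemma gQ_t : gQ tA = TQ := by
  rw [tA, gQ, IsLocalization.Away.lift_eq]; simp [ψ]
lemma gQ_δ : gQ δA = xQ := by
  rw [δA, gQ, IsLocalization.Away.lift_eq]; simp [ψ]

lemma gQ_s : gQ sA = SQ := by
  have hunit : IsUnit (1 - TQ * xQ) := IsUnit.of_mul_eq_one _ hQunit
  apply hunit.mul_right_cancel
  have h1 : gQ sA * (1 - TQ * xQ) = -xQ ^ 2 := by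
    have := congrArg gQ hsA
    simpa [map_mul, map_sub, map_one, map_neg, map_pow, gQ_t, gQ_δ] using this
  rw [h1]
  linear_combination -hrel

/-- Extensionality for ring homs out of `QST`. -/
lemma QST_hom_ext {B : Type*} [CommRing B] {f g : QST →+* B}
    (hS : f SQ = g SQ) (hT : f TQ = g TQ) (hx : f xQ = g xQ) : f = g := by
  have hcomp : f.comp (AdjoinRoot.mk pQ) = g.comp (AdjoinRoot.mk pQ) := by
    apply Polynomial.ringHom_ext'
    · apply MvPolynomial.ringHom_ext'
      · exact Subsingleton.elim _ _
      · intro i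
        fin_cases i
        · simpa [AdjoinRoot.algebraMap_eq, SQ, AdjoinRoot.mk_C] using hS
        · simpa [AdjoinRoot.algebraMap_eq, TQ, AdjoinRoot.mk_C] using hT
    · simpa [AdjoinRoot.mk_X, xQ] using hx
  refine RingHom.ext fun y => ?_
  obtain ⟨p, rfl⟩ := AdjoinRoot.mk_surjective y
  exact RingHom.congr_fun hcomp p

lemma g_comp_f : gQ.comp fQ = RingHom.id QST := by
  apply QST_hom_ext
  · simp [fQ_S, gQ_s]
  · simp [fQ_T, gQ_t]
  · simp [fQ_x, gQ_δ]

lemma f_comp_g : fQ.comp gQ = RingHom.id ARing := by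
  apply IsLocalization.ringHom_ext
    (Submonoid.powers ((1 : Ztδ) - MvPolynomial.X 0 * MvPolynomial.X 1))
  apply MvPolynomial.ringHom_ext'
  · exact Subsingleton.elim _ _
  · intro i
    fin_cases i
    · show fQ (gQ tA) = tA
      rw [gQ_t, fQ_T]
    · show fQ (gQ δA) = δA
      rw [gQ_δ, fQ_x]

lemma fQ_bij : Function.Bijective fQ := by
  refine ⟨Function.LeftInverse.injective (g := gQ) ?_,
    Function.RightInverse.surjective (g := gQ) ?_⟩
  · intro x; exact RingHom.congr_fun g_comp_f x
  · intro x; exact RingHom.congr_fun f_comp_g x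

end Stmt13Aux


open Stmt13Aux in
/-- The unique ring homomorphism `ℤ[S,T][X]/(X² - T·S·X + S) → A` sending `S ↦ s`,
`T ↦ t` and `X ↦ δ` is bijective; moreover `δ² - t·s·δ + s = 0` in `A`. -/
theorem stmt13 :
    (∃! f : QST →+* ARing,
        f (algebraMap ZST QST (MvPolynomial.X 0)) = sA ∧
        f (algebraMap ZST QST (MvPolynomial.X 1)) = tA ∧
        f (AdjoinRoot.root _) = δA) ∧
    (∀ f : QST →+* ARing,
        f (algebraMap ZST QST (MvPolynomial.X 0)) = sA →
        f (algebraMap ZST QST (MvPolynomial.X 1)) = tA →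
        f (AdjoinRoot.root _) = δA → Function.Bijective f) ∧
    δA ^ 2 - tA * sA * δA + sA = 0 := by
  have huniq : ∀ f : QST →+* ARing,
      f (algebraMap ZST QST (MvPolynomial.X 0)) = sA →
      f (algebraMap ZST QST (MvPolynomial.X 1)) = tA →
      f (AdjoinRoot.root _) = δA → f = fQ := by
    intro f h1 h2 h3
    exact QST_hom_ext (h1.trans fQ_S.symm) (h2.trans fQ_T.symm) (h3.trans fQ_x.symm)
  refine ⟨⟨fQ, ⟨fQ_S, fQ_T, fQ_x⟩, fun f ⟨h1, h2, h3⟩ => huniq f h1 h2 h3⟩,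
    fun f h1 h2 h3 => ?_, hkey⟩
  rw [huniq f h1 h2 h3]
  exact fQ_bij

end
end
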